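/- In a Möbius category X, the Möbius function μ = Φ_even − Φ_odd satisfies ζ ∗ μ = δ = μ ∗ ζ in the incidence algebra, where ζ is constantly 1, δ is 1 on identities and 0 elsewhere, and Φ_even, Φ_odd count factorisations of a morphism into an even resp. odd number of non-identity morphisms. -/
import Mathlib


open CategoryTheory
open scoped Classical

/-- The set of morphisms of a category, as a sigma type. -/
abbrev Mor (C : Type u) [SmallCategory C] : Type u := Σ x : C, Σ z : C, x ⟶ z

/-- A morphism (as a point of `Mor C`) is an identity. -/
def IsIdMor {C : Type u} [SmallCategory C] (m : Mor C) : Prop := ∃ x : C, m = ⟨x, x, 𝟙 x⟩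

/-- Two-step factorisations of a morphism. -/
abbrev TwoStepFact {C : Type u} [SmallCategory C] (m : Mor C) : Type u :=
  Σ y : C, { p : (m.1 ⟶ y) × (y ⟶ m.2.1) // p.1 ≫ p.2 = m.2.2 }

/-- Factorisations of a morphism into `n` non-identity morphisms. -/
def FactNI (C : Type u) [SmallCategory C] : ℕ → Mor C → Type u
  | 0, m => ULift.{u} (PLift (IsIdMor m))
  | n + 1, m => Σ y : C, Σ g : m.1 ⟶ y, Σ h : y ⟶ m.2.1,
      PLift (g ≫ h = m.2.2 ∧ ¬ IsIdMor (⟨m.1, y, g⟩ : Mor C)) × FactNI C n ⟨y, m.2.1, h⟩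

/-- `Φ_n(f)`: the number of factorisations of `f` into `n` non-identity morphisms. -/
noncomputable def Phi (C : Type u) [SmallCategory C] (n : ℕ) (m : Mor C) : ℚ :=
  (Nat.card (FactNI C n m) : ℚ)

/-- The Möbius function `μ = Φ_even − Φ_odd`. -/
noncomputable def mobiusFn (C : Type u) [SmallCategory C] (m : Mor C) : ℚ :=
  (∑ᶠ n : ℕ, if Even n then Phi C n m else 0) - (∑ᶠ n : ℕ, if Odd n then Phi C n m else 0)

/-- Convolution product in the incidence algebra of a category. -/
noncomputable def conv {C : Type u} [SmallCategory C] (α β : Mor C → ℚ) : Mor C → ℚ :=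
  fun m => ∑ᶠ p : TwoStepFact m,
    α ⟨m.1, p.1, p.2.1.1⟩ * β ⟨p.1, m.2.1, p.2.1.2⟩

/-- The convolution unit: `δ f = 1` on identities and `0` elsewhere. -/
noncomputable def convUnit (C : Type u) [SmallCategory C] : Mor C → ℚ :=
  fun m => if IsIdMor m then 1 else 0

/-- The zeta function, constantly `1`. -/
def zetaFn (C : Type u) [SmallCategory C] : Mor C → ℚ := fun _ => 1

section MobiusAux

variable {C : Type u} [SmallCategory C]

@[reducible] def pFst (m : Mor C) (p : TwoStepFact m) : Mor C := ⟨m.1, p.1, p.2.1.1⟩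
@[reducible] def pSnd (m : Mor C) (p : TwoStepFact m) : Mor C := ⟨p.1, m.2.1, p.2.1.2⟩

lemma isIdMor_id (x : C) : IsIdMor (⟨x, x, 𝟙 x⟩ : Mor C) := ⟨x, rfl⟩

lemma isIdMor_elim {x y : C} {f : x ⟶ y} (h : IsIdMor (⟨x, y, f⟩ : Mor C)) :
    ∃ e : x = y, HEq f (𝟙 x) := by
  obtain ⟨a, ha⟩ := h
  have h1 : x = a := congrArg Sigma.fst ha
  subst h1
  have h2 : (⟨y, f⟩ : Σ z : C, x ⟶ z) = ⟨x, 𝟙 x⟩ := by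
    simpa [Sigma.mk.inj_iff] using ha
  have h3 : y = x := congrArg Sigma.fst h2
  subst h3
  refine ⟨rfl, ?_⟩
  simpa [Sigma.mk.inj_iff] using h2

lemma finite_factNI (hMob : Finite (Σ n : ℕ, FactNI C n m)) (n : ℕ) :
    Finite (FactNI C n m) :=
  Finite.of_injective (fun x => (⟨n, x⟩ : Σ n : ℕ, FactNI C n m))
    (fun a b hab => by simpa using hab)

lemma phi_zero (m : Mor C) : Phi C 0 m = if IsIdMor m then 1 else 0 := by
  unfold Phi FactNI
  by_cases h : IsIdMor m
  · haveI : Unique (ULift.{u} (PLift (IsIdMor m))) :=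
      ⟨⟨⟨⟨h⟩⟩⟩, fun a => rfl⟩
    simp [Nat.card_unique, h]
  · haveI : IsEmpty (ULift.{u} (PLift (IsIdMor m))) :=
      ⟨fun a => h a.down.down⟩
    simp [Nat.card_of_isEmpty, h]

/-- Left-peeling equivalence. -/
def eL (n : ℕ) (m : Mor C) :
    FactNI C (n + 1) m ≃
      Σ p : TwoStepFact m, PLift (¬ IsIdMor (pFst m p)) × FactNI C n (pSnd m p) where
  toFun x := ⟨⟨x.1, ⟨(x.2.1, x.2.2.1), x.2.2.2.1.down.1⟩⟩, ⟨x.2.2.2.1.down.2⟩, x.2.2.2.2⟩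
  invFun x := ⟨x.1.1, x.1.2.1.1, x.1.2.1.2, ⟨⟨x.1.2.2, x.2.1.down⟩⟩, x.2.2⟩
  left_inv x := rfl
  right_inv x := rfl

lemma phi_succ (hlf : ∀ m : Mor C, Finite (TwoStepFact m))
    (hMob : ∀ m : Mor C, Finite (Σ n : ℕ, FactNI C n m)) (n : ℕ) (m : Mor C) :
    Phi C (n + 1) m =
      ∑ᶠ p : TwoStepFact m, if IsIdMor (pFst m p) then 0 else Phi C n (pSnd m p) := by
  letI : Fintype (TwoStepFact m) := @Fintype.ofFinite _ (hlf m)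
  letI : ∀ p : TwoStepFact m, Fintype (FactNI C n (pSnd m p)) :=
    fun p => @Fintype.ofFinite _ (finite_factNI (hMob _) n)
  rw [finsum_eq_sum_of_fintype]
  unfold Phi
  rw [Nat.card_congr (eL n m), Nat.card_eq_fintype_card, Fintype.card_sigma]
  push_cast
  refine Finset.sum_congr rfl fun p _ => ?_
  by_cases h : IsIdMor (pFst m p)
  · haveI : IsEmpty (PLift (¬ IsIdMor (pFst m p))) := ⟨fun a => a.down h⟩
    simp [h, Fintype.card_eq_zero]
  · haveI : Unique (PLift (¬ IsIdMor (pFst m p))) := ⟨⟨⟨h⟩⟩, fun a => rfl⟩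
    simp [h, Fintype.card_prod, Nat.card_eq_fintype_card]


def Three (m : Mor C) : Type u :=
  Σ y : C, Σ z : C, { t : (m.1 ⟶ y) × (y ⟶ z) × (z ⟶ m.2.1) // t.1 ≫ t.2.1 ≫ t.2.2 = m.2.2 }

def E1 (m : Mor C) : (Σ p : TwoStepFact m, TwoStepFact (pSnd m p)) ≃ Three m where
  toFun := fun ⟨⟨y, ⟨⟨g, h⟩, pf⟩⟩, ⟨z, ⟨⟨k, l⟩, pf2⟩⟩⟩ =>
    ⟨y, z, ⟨(g, k, l), by dsimp at pf2 ⊢; rw [pf2, pf]⟩⟩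
  invFun := fun ⟨y, z, ⟨⟨g, k, l⟩, pf⟩⟩ =>
    ⟨⟨y, ⟨(g, k ≫ l), by simpa using pf⟩⟩, ⟨z, ⟨(k, l), rfl⟩⟩⟩
  left_inv := by
    rintro ⟨⟨y, ⟨⟨g, h⟩, pf⟩⟩, ⟨z, ⟨⟨k, l⟩, pf2⟩⟩⟩
    dsimp only [pSnd] at k l pf2
    subst pf2
    rfl
  right_inv := by
    rintro ⟨y, z, ⟨⟨g, k, l⟩, pf⟩⟩
    rfl

def E2 (m : Mor C) : (Σ p : TwoStepFact m, TwoStepFact (pFst m p)) ≃ Three m where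
  toFun := fun ⟨⟨z, ⟨⟨G, l⟩, pf⟩⟩, ⟨y, ⟨⟨g, k⟩, pf2⟩⟩⟩ =>
    ⟨y, z, ⟨(g, k, l), by dsimp at pf2 ⊢; rw [← Category.assoc, pf2, pf]⟩⟩
  invFun := fun ⟨y, z, ⟨⟨g, k, l⟩, pf⟩⟩ =>
    ⟨⟨z, ⟨(g ≫ k, l), by simpa using pf⟩⟩, ⟨y, ⟨(g, k), rfl⟩⟩⟩
  left_inv := by
    rintro ⟨⟨z, ⟨⟨G, l⟩, pf⟩⟩, ⟨y, ⟨⟨g, k⟩, pf2⟩⟩⟩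
    dsimp only [pFst] at g k pf2
    subst pf2
    rfl
  right_inv := by
    rintro ⟨y, z, ⟨⟨g, k, l⟩, pf⟩⟩
    rfl

def valF (m : Mor C) (F : Mor C → Mor C → Mor C → ℚ) : Three m → ℚ :=
  fun ⟨y, z, ⟨⟨g, k, l⟩, _⟩⟩ => F ⟨m.1, y, g⟩ ⟨y, z, k⟩ ⟨z, m.2.1, l⟩

lemma fubini (hlf : ∀ m : Mor C, Finite (TwoStepFact m)) (m : Mor C)
    (F : Mor C → Mor C → Mor C → ℚ) :
    (∑ᶠ p : TwoStepFact m, ∑ᶠ q : TwoStepFact (pSnd m p),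
        F (pFst m p) (pFst (pSnd m p) q) (pSnd (pSnd m p) q)) =
    (∑ᶠ p : TwoStepFact m, ∑ᶠ q : TwoStepFact (pFst m p),
        F (pFst (pFst m p) q) (pSnd (pFst m p) q) (pSnd m p)) := by
  letI : Fintype (TwoStepFact m) := @Fintype.ofFinite _ (hlf m)
  letI : ∀ p : TwoStepFact m, Fintype (TwoStepFact (pSnd m p)) :=
    fun p => @Fintype.ofFinite _ (hlf _)
  letI : ∀ p : TwoStepFact m, Fintype (TwoStepFact (pFst m p)) :=
    fun p => @Fintype.ofFinite _ (hlf _)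
  letI : Fintype (Three m) := @Fintype.ofFinite _ (Finite.of_equiv _ (E1 m))
  simp only [finsum_eq_sum_of_fintype]
  rw [Finset.sum_sigma' Finset.univ (fun _ => Finset.univ), Finset.sum_sigma' Finset.univ (fun _ => Finset.univ)]
  have h1 : (Finset.univ.sigma fun _ => Finset.univ)
      = (Finset.univ : Finset (Σ p : TwoStepFact m, TwoStepFact (pSnd m p))) := rfl
  have h2 : (Finset.univ.sigma fun _ => Finset.univ)
      = (Finset.univ : Finset (Σ p : TwoStepFact m, TwoStepFact (pFst m p))) := rfl
  rw [h1, h2]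
  rw [Fintype.sum_equiv (E1 m) _ (valF m F) ?h1, Fintype.sum_equiv (E2 m) _ (valF m F) ?h2]
  case h1 =>
    rintro ⟨⟨y, ⟨⟨g, h⟩, pf⟩⟩, ⟨z, ⟨⟨k, l⟩, pf2⟩⟩⟩
    rfl
  case h2 =>
    rintro ⟨⟨z, ⟨⟨G, l⟩, pf⟩⟩, ⟨y, ⟨⟨g, k⟩, pf2⟩⟩⟩
    rfl

lemma fst_id_unique {m : Mor C} (p : TwoStepFact m) (h : IsIdMor (pFst m p)) :
    p = ⟨m.1, ⟨(𝟙 m.1, m.2.2), Category.id_comp _⟩⟩ := by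
  obtain ⟨y, ⟨⟨g, k⟩, pf⟩⟩ := p
  have h' : IsIdMor (⟨m.1, y, g⟩ : Mor C) := h
  obtain ⟨e, he⟩ := isIdMor_elim h'
  subst e
  have hg : g = 𝟙 m.1 := eq_of_heq he
  subst hg
  have hk : k = m.2.2 := by simpa using pf
  subst hk
  rfl

lemma snd_id_unique {m : Mor C} (p : TwoStepFact m) (h : IsIdMor (pSnd m p)) :
    p = ⟨m.2.1, ⟨(m.2.2, 𝟙 m.2.1), Category.comp_id _⟩⟩ := by
  obtain ⟨y, ⟨⟨g, k⟩, pf⟩⟩ := p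
  have h' : IsIdMor (⟨y, m.2.1, k⟩ : Mor C) := h
  obtain ⟨e, he⟩ := isIdMor_elim h'
  subst e
  have hk : k = 𝟙 m.2.1 := eq_of_heq he
  subst hk
  have hg : g = m.2.2 := by simpa using pf
  subst hg
  rfl

lemma idL (m : Mor C) (f : Mor C → ℚ) :
    (∑ᶠ p : TwoStepFact m, if IsIdMor (pFst m p) then f (pSnd m p) else 0) = f m := by
  rw [finsum_eq_single _ (⟨m.1, ⟨(𝟙 m.1, m.2.2), Category.id_comp _⟩⟩ : TwoStepFact m)]
  · rw [if_pos (isIdMor_id m.1)]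
  · intro p hp
    rw [if_neg]
    intro hid
    exact hp (fst_id_unique p hid)

lemma idR (m : Mor C) (f : Mor C → ℚ) :
    (∑ᶠ p : TwoStepFact m, if IsIdMor (pSnd m p) then f (pFst m p) else 0) = f m := by
  rw [finsum_eq_single _ (⟨m.2.1, ⟨(m.2.2, 𝟙 m.2.1), Category.comp_id _⟩⟩ : TwoStepFact m)]
  · rw [if_pos (isIdMor_id m.2.1)]
  · intro p hp
    rw [if_neg]
    intro hid
    exact hp (snd_id_unique p hid)

lemma pSnd_of_fst_id {m : Mor C} {p : TwoStepFact m} (h : IsIdMor (pFst m p)) :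
    pSnd m p = m := by rw [fst_id_unique p h]

lemma pFst_of_snd_id {m : Mor C} {p : TwoStepFact m} (h : IsIdMor (pSnd m p)) :
    pFst m p = m := by rw [snd_id_unique p h]

lemma aux_base_L (m : Mor C) :
    (∑ᶠ p : TwoStepFact m,
      if IsIdMor (pFst m p) then (0:ℚ) else if IsIdMor (pSnd m p) then 1 else 0) =
    if IsIdMor m then 0 else 1 := by
  by_cases hm : IsIdMor m
  · rw [if_pos hm]
    apply finsum_eq_zero_of_forall_eq_zero
    intro p
    by_cases hf : IsIdMor (pFst m p)
    · rw [if_pos hf]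
    · rw [if_neg hf, if_neg]
      intro hs
      exact hf (by rw [pFst_of_snd_id hs]; exact hm)
  · rw [if_neg hm]
    have : ∀ p : TwoStepFact m,
        (if IsIdMor (pFst m p) then (0:ℚ) else if IsIdMor (pSnd m p) then 1 else 0) =
        (if IsIdMor (pSnd m p) then (1:ℚ) else 0) := by
      intro p
      by_cases hs : IsIdMor (pSnd m p)
      · have hf : ¬ IsIdMor (pFst m p) :=
          fun hf => hm (by rw [← pSnd_of_fst_id hf]; exact hs)
        rw [if_pos hs, if_neg hf]
      · rw [if_neg hs]
        split <;> rfl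
    rw [finsum_congr this, idR m (fun _ => 1)]

lemma aux_base_R (m : Mor C) :
    (∑ᶠ p : TwoStepFact m,
      if IsIdMor (pSnd m p) then (0:ℚ) else if IsIdMor (pFst m p) then 1 else 0) =
    if IsIdMor m then 0 else 1 := by
  by_cases hm : IsIdMor m
  · rw [if_pos hm]
    apply finsum_eq_zero_of_forall_eq_zero
    intro p
    by_cases hs : IsIdMor (pSnd m p)
    · rw [if_pos hs]
    · rw [if_neg hs, if_neg]
      intro hf
      exact hs (by rw [pSnd_of_fst_id hf]; exact hm)
  · rw [if_neg hm]
    have : ∀ p : TwoStepFact m,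
        (if IsIdMor (pSnd m p) then (0:ℚ) else if IsIdMor (pFst m p) then 1 else 0) =
        (if IsIdMor (pFst m p) then (1:ℚ) else 0) := by
      intro p
      by_cases hf : IsIdMor (pFst m p)
      · have hs : ¬ IsIdMor (pSnd m p) :=
          fun hs => hm (by rw [← pFst_of_snd_id hs]; exact hf)
        rw [if_pos hf, if_neg hs]
      · rw [if_neg hf]
        split <;> rfl
    rw [finsum_congr this, idL m (fun _ => 1)]

lemma phi_one (hlf : ∀ m : Mor C, Finite (TwoStepFact m))
    (hMob : ∀ m : Mor C, Finite (Σ n : ℕ, FactNI C n m)) (m : Mor C) :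
    Phi C 1 m = if IsIdMor m then 0 else 1 := by
  rw [phi_succ hlf hMob 0 m, ← aux_base_L m]
  refine finsum_congr fun p => ?_
  by_cases hf : IsIdMor (pFst m p)
  · rw [if_pos hf, if_pos hf]
  · rw [if_neg hf, if_neg hf, phi_zero]

lemma phi_succ_right (hlf : ∀ m : Mor C, Finite (TwoStepFact m))
    (hMob : ∀ m : Mor C, Finite (Σ n : ℕ, FactNI C n m)) (n : ℕ) (m : Mor C) :
    Phi C (n + 1) m =
      ∑ᶠ p : TwoStepFact m, if IsIdMor (pSnd m p) then 0 else Phi C n (pFst m p) := by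
  induction n generalizing m with
  | zero =>
    rw [phi_one hlf hMob m, ← aux_base_R m]
    refine finsum_congr fun p => ?_
    by_cases hs : IsIdMor (pSnd m p)
    · rw [if_pos hs, if_pos hs]
    · rw [if_neg hs, if_neg hs, phi_zero]
  | succ n ih =>
    rw [phi_succ hlf hMob (n + 1) m]
    have step1 : ∀ p : TwoStepFact m,
        (if IsIdMor (pFst m p) then (0:ℚ) else Phi C (n + 1) (pSnd m p)) =
        ∑ᶠ q : TwoStepFact (pSnd m p),
          if IsIdMor (pFst m p) then (0:ℚ)
          else if IsIdMor (pSnd (pSnd m p) q) then 0 else Phi C n (pFst (pSnd m p) q) := by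
      intro p
      by_cases hf : IsIdMor (pFst m p)
      · simp [hf]
      · simp only [if_neg hf]
        exact ih (pSnd m p)
    refine (finsum_congr step1).trans ?_
    refine (fubini hlf m (fun a b c =>
      if IsIdMor a then (0:ℚ) else if IsIdMor c then 0 else Phi C n b)).trans ?_
    refine finsum_congr fun p => ?_
    by_cases hs : IsIdMor (pSnd m p)
    · rw [if_pos hs]
      apply finsum_eq_zero_of_forall_eq_zero
      intro q
      split <;> rfl
    · rw [if_neg hs, phi_succ hlf hMob n (pFst m p)]
      refine finsum_congr fun q => ?_
      split <;> rfl

lemma phi_support (m : Mor C) (hMob : Finite (Σ n : ℕ, FactNI C n m)) :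
    (Function.support fun n => Phi C n m).Finite := by
  have hsub : (Function.support fun n => Phi C n m) ⊆
      Set.range (Sigma.fst : (Σ n : ℕ, FactNI C n m) → ℕ) := by
    intro n hn
    have h0 : Nat.card (FactNI C n m) ≠ 0 := by
      simpa [Phi, Function.mem_support] using hn
    obtain ⟨x⟩ := (Nat.card_ne_zero.mp h0).1
    exact ⟨⟨n, x⟩, rfl⟩
  exact (Set.finite_range _).subset hsub

lemma mobius_eq (hMob : ∀ m : Mor C, Finite (Σ n : ℕ, FactNI C n m)) (m : Mor C) :
    mobiusFn C m = ∑ᶠ n : ℕ, (-1 : ℚ) ^ n * Phi C n m := by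
  have hs := phi_support m (hMob m)
  have h1 : (Function.support fun n => if Even n then Phi C n m else 0).Finite := by
    refine hs.subset fun n hn => ?_
    simp only [Function.mem_support] at hn ⊢
    intro h0
    apply hn
    split <;> simp [h0]
  have h2 : (Function.support fun n => if Odd n then Phi C n m else 0).Finite := by
    refine hs.subset fun n hn => ?_
    simp only [Function.mem_support] at hn ⊢
    intro h0
    apply hn
    split <;> simp [h0]
  unfold mobiusFn
  rw [← finsum_sub_distrib h1 h2]
  refine finsum_congr fun n => ?_
  rcases Nat.even_or_odd n with he | ho
  · rw [if_pos he, if_neg (Nat.not_odd_iff_even.mpr he), he.neg_one_pow, one_mul, sub_zero]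
  · rw [if_neg (Nat.not_even_iff_odd.mpr ho), if_pos ho, ho.neg_one_pow, zero_sub, neg_mul,
      one_mul]

lemma telescope_aux (hMob : ∀ m : Mor C, Finite (Σ n : ℕ, FactNI C n m)) (m : Mor C) :
    (∑ᶠ n : ℕ, (-1 : ℚ) ^ n * (Phi C n m + Phi C (n + 1) m)) = convUnit C m := by
  set u : ℕ → ℚ := fun n => (-1 : ℚ) ^ n * Phi C n m with hu
  have hsu : (Function.support u).Finite := by
    refine (phi_support m (hMob m)).subset fun n hn => ?_
    simp only [Function.mem_support, hu] at hn ⊢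
    intro h0
    apply hn
    rw [h0, mul_zero]
  obtain ⟨N, hN⟩ := hsu.bddAbove
  have hsub : (Function.support fun n => u n - u (n + 1)) ⊆ ↑(Finset.range (N + 1)) := by
    intro n hn
    simp only [Function.mem_support] at hn
    simp only [Finset.coe_range, Set.mem_Iio]
    by_contra hlt
    push_neg at hlt
    have hn1 : u n = 0 := by
      by_contra h
      exact absurd (hN h) (by omega)
    have hn2 : u (n + 1) = 0 := by
      by_contra h
      exact absurd (hN h) (by omega)
    rw [hn1, hn2, sub_self] at hn
    exact hn rfl
  have hterm : ∀ n : ℕ, (-1 : ℚ) ^ n * (Phi C n m + Phi C (n + 1) m) = u n - u (n + 1) := by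
    intro n
    simp only [hu, pow_succ]
    ring
  rw [finsum_congr hterm, finsum_eq_finset_sum_of_support_subset _ hsub,
    Finset.sum_range_sub' u (N + 1)]
  have huN : u (N + 1) = 0 := by
    by_contra h
    exact absurd (hN h) (by omega)
  rw [huN, sub_zero, hu]
  simp only [pow_zero, one_mul, phi_zero]
  rfl

lemma support_neg_pow (m' : Mor C) (hMob : Finite (Σ n : ℕ, FactNI C n m')) :
    (Function.support fun n => (-1 : ℚ) ^ n * Phi C n m').Finite := by
  refine (phi_support m' hMob).subset fun n hn => ?_
  simp only [Function.mem_support] at hn ⊢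
  intro h0
  apply hn
  rw [h0, mul_zero]

lemma conv_zeta_mobius (hlf : ∀ m : Mor C, Finite (TwoStepFact m))
    (hMob : ∀ m : Mor C, Finite (Σ n : ℕ, FactNI C n m)) :
    conv (zetaFn C) (mobiusFn C) = convUnit C := by
  funext m
  letI : Fintype (TwoStepFact m) := @Fintype.ofFinite _ (hlf m)
  have step0 : conv (zetaFn C) (mobiusFn C) m = ∑ᶠ p : TwoStepFact m, mobiusFn C (pSnd m p) :=
    finsum_congr fun p => one_mul _
  have step1 : (∑ p : TwoStepFact m, mobiusFn C (pSnd m p))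
      = ∑ᶠ n : ℕ, ∑ p : TwoStepFact m, (-1 : ℚ) ^ n * Phi C n (pSnd m p) := by
    rw [Finset.sum_congr rfl (fun p _ => mobius_eq hMob (pSnd m p))]
    exact (finsum_sum_comm Finset.univ (fun n p => (-1 : ℚ) ^ n * Phi C n (pSnd m p))
      (fun p _ => support_neg_pow (pSnd m p) (hMob _))).symm
  have step2 : ∀ n : ℕ, (∑ p : TwoStepFact m, (-1 : ℚ) ^ n * Phi C n (pSnd m p))
      = (-1 : ℚ) ^ n * (Phi C n m + Phi C (n + 1) m) := by
    intro n
    rw [← Finset.mul_sum]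
    congr 1
    have hsplit : ∀ p : TwoStepFact m, Phi C n (pSnd m p)
        = (if IsIdMor (pFst m p) then Phi C n (pSnd m p) else 0)
          + (if IsIdMor (pFst m p) then 0 else Phi C n (pSnd m p)) := by
      intro p
      split <;> simp
    rw [Finset.sum_congr rfl (fun p _ => hsplit p), Finset.sum_add_distrib,
      ← finsum_eq_sum_of_fintype, ← finsum_eq_sum_of_fintype,
      idL m (Phi C n), ← phi_succ hlf hMob n m]
  rw [step0, finsum_eq_sum_of_fintype, step1, finsum_congr step2, telescope_aux hMob m]

lemma conv_mobius_zeta (hlf : ∀ m : Mor C, Finite (TwoStepFact m))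
    (hMob : ∀ m : Mor C, Finite (Σ n : ℕ, FactNI C n m)) :
    conv (mobiusFn C) (zetaFn C) = convUnit C := by
  funext m
  letI : Fintype (TwoStepFact m) := @Fintype.ofFinite _ (hlf m)
  have step0 : conv (mobiusFn C) (zetaFn C) m = ∑ᶠ p : TwoStepFact m, mobiusFn C (pFst m p) :=
    finsum_congr fun p => mul_one _
  have step1 : (∑ p : TwoStepFact m, mobiusFn C (pFst m p))
      = ∑ᶠ n : ℕ, ∑ p : TwoStepFact m, (-1 : ℚ) ^ n * Phi C n (pFst m p) := by
    rw [Finset.sum_congr rfl (fun p _ => mobius_eq hMob (pFst m p))]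
    exact (finsum_sum_comm Finset.univ (fun n p => (-1 : ℚ) ^ n * Phi C n (pFst m p))
      (fun p _ => support_neg_pow (pFst m p) (hMob _))).symm
  have step2 : ∀ n : ℕ, (∑ p : TwoStepFact m, (-1 : ℚ) ^ n * Phi C n (pFst m p))
      = (-1 : ℚ) ^ n * (Phi C n m + Phi C (n + 1) m) := by
    intro n
    rw [← Finset.mul_sum]
    congr 1
    have hsplit : ∀ p : TwoStepFact m, Phi C n (pFst m p)
        = (if IsIdMor (pSnd m p) then Phi C n (pFst m p) else 0)
          + (if IsIdMor (pSnd m p) then 0 else Phi C n (pFst m p)) := by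
      intro p
      split <;> simp
    rw [Finset.sum_congr rfl (fun p _ => hsplit p), Finset.sum_add_distrib,
      ← finsum_eq_sum_of_fintype, ← finsum_eq_sum_of_fintype,
      idR m (Phi C n), ← phi_succ_right hlf hMob n m]
  rw [step0, finsum_eq_sum_of_fintype, step1, finsum_congr step2, telescope_aux hMob m]

end MobiusAux

/-- In a Möbius category, `ζ ∗ μ = δ = μ ∗ ζ`, where `μ = Φ_even − Φ_odd`. -/
theorem mobius_inversion_mobius_category (C : Type u) [SmallCategory C]
    (hlf : ∀ m : Mor C, Finite (TwoStepFact m))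
    (hMob : ∀ m : Mor C, Finite (Σ n : ℕ, FactNI C n m)) :
    conv (zetaFn C) (mobiusFn C) = convUnit C ∧
    conv (mobiusFn C) (zetaFn C) = convUnit C := by
  exact ⟨conv_zeta_mobius hlf hMob, conv_mobius_zeta hlf hMob⟩
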